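/- Let Q = ⟨X,A,S,τ⟩ ⊑ Q' = ⟨X',A',S',τ'⟩ be QBAFs for an explanandum e with X' = X ∪ {a} for some a ∉ X, τ'(a) = 0, where a has no attackers and no supporters in Q' and every edge in (A'∪S')∖(A∪S) has a as its source. Then under the DF-QuAD evaluation, σ(Q',a) = 0 and σ(Q',b) = σ(Q,b) for every b ∈ X. -/
import Mathlib


universe u v

variable {U : Type u} {Ag : Type v}

/-- A bipolar argumentation framework (BAF): arguments `X`, attacks `Att`, supports `Supp`. -/
structure BAF (U : Type u) where
  X : Finset U
  Att : Finset (U × U)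
  Supp : Finset (U × U)

namespace BAF

variable [DecidableEq U]

/-- The edges of a BAF: attacks together with supports. -/
def edges (B : BAF U) : Finset (U × U) := B.Att ∪ B.Supp

/-- A path from `a` to `b`: a nonempty list of consecutive edges `(c₀,c₁),…,(c_{n−1},cₙ)`
with `c₀ = a` and `cₙ = b`. -/
inductive IsPath (B : BAF U) : U → U → List (U × U) → Prop
  | single {a b : U} (h : (a, b) ∈ B.edges) : IsPath B a b [(a, b)]
  | cons {a c b : U} {p : List (U × U)} (h : (a, c) ∈ B.edges)
      (hp : IsPath B c b p) : IsPath B a b ((a, c) :: p)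

/-- `B ⊑ B'` for BAFs (componentwise inclusion). -/
def Sub (B B' : BAF U) : Prop := B.X ⊆ B'.X ∧ B.Att ⊆ B'.Att ∧ B.Supp ⊆ B'.Supp

/-- `B` is a BAF for the explanandum `e`. -/
structure IsFor (B : BAF U) (e : U) : Prop where
  e_mem : e ∈ B.X
  att_mem : ∀ p ∈ B.Att, p.1 ∈ B.X ∧ p.2 ∈ B.X
  supp_mem : ∀ p ∈ B.Supp, p.1 ∈ B.X ∧ p.2 ∈ B.X
  disj : ∀ p : U × U, ¬(p ∈ B.Att ∧ p ∈ B.Supp)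
  no_out : ∀ a : U, (e, a) ∉ B.edges
  reach : ∀ a ∈ B.X, a ≠ e → ∃ p, B.IsPath a e p
  acyclic : ∀ (a : U) (p : List (U × U)), ¬ B.IsPath a a p

/-- The number of attack edges occurring in a path. -/
def attCount (B : BAF U) (p : List (U × U)) : ℕ :=
  (p.filter (fun q => q ∈ B.Att)).length

/-- Pro arguments: arguments with a path to `e` containing an even number of attacks. -/
def pro (B : BAF U) (e : U) : Set U :=
  {a | a ∈ B.X ∧ ∃ p, B.IsPath a e p ∧ Even (B.attCount p)}

/-- Con arguments: arguments with a path to `e` containing an odd number of attacks. -/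
def con (B : BAF U) (e : U) : Set U :=
  {a | a ∈ B.X ∧ ∃ p, B.IsPath a e p ∧ Odd (B.attCount p)}

/-- The shortest path from `x` to `e` is strictly shorter than every path from `y` to `e`. -/
def SPlt (B : BAF U) (e x y : U) : Prop :=
  ∃ p, B.IsPath x e p ∧ ∀ q, B.IsPath y e q → p.length < q.length

end BAF

/-- A quantitative bipolar argumentation framework (QBAF), with base scores `bs`. -/
structure QBAF (U : Type u) where
  X : Finset U
  Att : Finset (U × U)
  Supp : Finset (U × U)
  bs : U → ℝ

namespace QBAF

variable [DecidableEq U]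

def toBAF (Q : QBAF U) : BAF U := ⟨Q.X, Q.Att, Q.Supp⟩

def edges (Q : QBAF U) : Finset (U × U) := Q.Att ∪ Q.Supp

/-- `Q` is a QBAF for `e`: its underlying BAF is for `e` and base scores lie in `[0,1]`. -/
def IsFor (Q : QBAF U) (e : U) : Prop :=
  Q.toBAF.IsFor e ∧ ∀ a ∈ Q.X, Q.bs a ∈ Set.Icc (0 : ℝ) 1

/-- `Q ⊑ Q'` for QBAFs. -/
def Sub (Q Q' : QBAF U) : Prop :=
  Q.X ⊆ Q'.X ∧ Q.Att ⊆ Q'.Att ∧ Q.Supp ⊆ Q'.Supp ∧ ∀ a ∈ Q.X, Q'.bs a = Q.bs a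

def attackers (Q : QBAF U) (a : U) : Finset U :=
  (Q.Att.filter (fun p => p.2 = a)).image Prod.fst

def supporters (Q : QBAF U) (a : U) : Finset U :=
  (Q.Supp.filter (fun p => p.2 = a)).image Prod.fst

end QBAF

/-- The DF-QuAD aggregation function on finite lists of values. -/
noncomputable def dfAgg : List ℝ → ℝ
  | [] => 0
  | v :: vs => v + dfAgg vs - v * dfAgg vs

/-- The DF-QuAD combination function. -/
noncomputable def dfComb (v0 vm vp : ℝ) : ℝ :=
  if vp ≤ vm then v0 - v0 * |vp - vm| else v0 + (1 - v0) * |vp - vm|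

/-- `f` is the DF-QuAD evaluation of the QBAF `Q`. -/
def IsDFQuADEval [DecidableEq U] (Q : QBAF U) (f : U → ℝ) : Prop :=
  ∀ a ∈ Q.X,
    f a = dfComb (Q.bs a) (dfAgg ((Q.attackers a).toList.map f))
        (dfAgg ((Q.supporters a).toList.map f))

/-- The stance determined by an evaluation value in `[0,1]`:
`−` (coded `-1`) on `[0,0.5)`, `0` on `{0.5}`, `+` (coded `1`) on `(0.5,1]`. -/
noncomputable def stanceVal (v : ℝ) : ℤ :=
  if v < 1 / 2 then -1 else if v = 1 / 2 then 0 else 1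

/-- An argumentative exchange (AX): exchange BAFs `B`, private QBAFs `Q`,
and a contributor mapping `contrib`. -/
structure AX (U : Type u) (Ag : Type v) where
  n : ℕ
  B : ℕ → BAF U
  Q : Ag → ℕ → QBAF U
  contrib : U × U → Ag × ℕ

namespace AX

variable [DecidableEq U]

/-- `E` is an AX for the explanandum `e` amongst the agents `Ag`. -/
structure IsAX (E : AX U Ag) (e : U) : Prop where
  n_pos : 0 < E.n
  agents : ∃ α β : Ag, α ≠ β
  B_for : ∀ t ≤ E.n, (E.B t).IsFor e
  B0_X : (E.B 0).X = {e}
  B0_Att : (E.B 0).Att = ∅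
  B0_Supp : (E.B 0).Supp = ∅
  B_mono : ∀ t < E.n, (E.B t).Sub (E.B (t + 1))
  Q_for : ∀ (α : Ag), ∀ t ≤ E.n, (E.Q α t).IsFor e
  Q_mono : ∀ (α : Ag), ∀ t < E.n, (E.Q α t).Sub (E.Q α (t + 1))
  Q_diff_X : ∀ (α : Ag), ∀ t < E.n,
    (E.Q α (t + 1)).X \ (E.Q α t).X ⊆ (E.B (t + 1)).X \ (E.B t).X
  Q_diff_Att : ∀ (α : Ag), ∀ t < E.n,
    (E.Q α (t + 1)).Att \ (E.Q α t).Att ⊆ (E.B (t + 1)).Att \ (E.B t).Att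
  Q_diff_Supp : ∀ (α : Ag), ∀ t < E.n,
    (E.Q α (t + 1)).Supp \ (E.Q α t).Supp ⊆ (E.B (t + 1)).Supp \ (E.B t).Supp
  learn_X : ∀ (α : Ag), ∀ t < E.n,
    (E.B (t + 1)).X \ (E.B t).X ⊆ (E.Q α (t + 1)).X
  learn_Att : ∀ (α : Ag), ∀ t < E.n,
    (E.B (t + 1)).Att \ (E.B t).Att ⊆ (E.Q α (t + 1)).Att
  learn_Supp : ∀ (α : Ag), ∀ t < E.n,
    (E.B (t + 1)).Supp \ (E.B t).Supp ⊆ (E.Q α (t + 1)).Supp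
  contrib_pos : ∀ p ∈ (E.B E.n).edges, 0 < (E.contrib p).2
  contrib_le : ∀ p ∈ (E.B E.n).edges, (E.contrib p).2 ≤ E.n
  contrib_mem : ∀ p ∈ (E.B E.n).edges, p ∈ (E.B (E.contrib p).2).edges
  contrib_new : ∀ p ∈ (E.B E.n).edges, p ∉ (E.B ((E.contrib p).2 - 1)).edges

/-- The set of edges contributed by agent `α` at timestep `t`. -/
def Cset [DecidableEq Ag] (E : AX U Ag) (α : Ag) (t : ℕ) : Finset (U × U) :=
  (E.B E.n).edges.filter (fun p => E.contrib p = (α, t))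

end AX

/-- All agents hold the same stance at timestep `t`. -/
def ResolvedAt (st : Ag → ℕ → ℤ) (t : ℕ) : Prop := ∀ α β : Ag, st α t = st β t

/-- The AX (with an initial conflict) is resolved. -/
def Resolved (E : AX U Ag) (st : Ag → ℕ → ℤ) : Prop :=
  ¬ ResolvedAt st 0 ∧ ResolvedAt st E.n ∧ ∀ t, 0 < t → t < E.n → ¬ ResolvedAt st t

/-- The AX (with an initial conflict) is unresolved. -/
def Unresolved (E : AX U Ag) (st : Ag → ℕ → ℤ) : Prop :=
  ¬ ResolvedAt st 0 ∧ ∀ t, 0 < t → t ≤ E.n → ¬ ResolvedAt st t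

/-- Agent `α` is arguing for `e` at `t`: some agent has a strictly smaller stance. -/
def ArguingFor (st : Ag → ℕ → ℤ) (α : Ag) (t : ℕ) : Prop := ∃ β, st β t < st α t

/-- Agent `α` is arguing against `e` at `t`: some agent has a strictly greater stance. -/
def ArguingAgainst (st : Ag → ℕ → ℤ) (α : Ag) (t : ℕ) : Prop := ∃ β, st α t < st β t

section Behaviours

variable [DecidableEq U]

/-- Condition (1) of the greedy behaviour: `(a,b)` is a pair of the private QBAF `Qp`
not yet in the exchange BAF `Bp`, in line with the agent's state (`forE`). -/
def GreedyEligible (Qp : QBAF U) (Bp : BAF U) (e : U) (forE : Bool) (a b : U) : Prop :=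
  (a, b) ∈ Qp.edges ∧ (a, b) ∉ Bp.edges ∧
    (if forE then
        ((a, b) ∈ Qp.Supp ∧ (b ∈ Bp.pro e ∨ b = e)) ∨ ((a, b) ∈ Qp.Att ∧ b ∈ Bp.con e)
      else
        ((a, b) ∈ Qp.Supp ∧ b ∈ Bp.con e) ∨ ((a, b) ∈ Qp.Att ∧ (b ∈ Bp.pro e ∨ b = e)))

/-- A greedy choice: eligible, of maximal strength (2), and closest to `e` among
equally strong eligible pairs (3). -/
def GreedyChoice (Qp : QBAF U) (Bp : BAF U) (σα : U → ℝ) (e : U) (forE : Bool)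
    (a b : U) : Prop :=
  GreedyEligible Qp Bp e forE a b ∧
    (∀ a' b' : U, GreedyEligible Qp Bp e forE a' b' → σα a' ≤ σα a) ∧
    (∀ a'' b'' : U, GreedyEligible Qp Bp e forE a'' b'' → σα a'' = σα a →
      ¬ BAF.SPlt Qp.toBAF e a'' a)

/-- A contribution set is a correct greedy contribution: empty or a single greedy choice. -/
def GreedyOK (Qp : QBAF U) (Bp : BAF U) (σα : U → ℝ) (e : U) (forE : Bool)
    (C : Finset (U × U)) : Prop :=
  C = ∅ ∨ ∃ a b : U, C = {(a, b)} ∧ GreedyChoice Qp Bp σα e forE a b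

/-- Agent `α` exhibits greedy behaviour throughout the AX `E`. -/
def GreedyBehaviour [DecidableEq Ag] (E : AX U Ag) (e : U)
    (ev : Ag → QBAF U → U → ℝ) (st : Ag → ℕ → ℤ) (α : Ag) : Prop :=
  ∀ t, 0 < t → t ≤ E.n →
    E.Cset α t = ∅ ∨
      ∃ a b : U, E.Cset α t = {(a, b)} ∧
        (ArguingFor st α (t - 1) →
          GreedyChoice (E.Q α (t - 1)) (E.B (t - 1)) (ev α (E.Q α (t - 1))) e true a b) ∧
        (ArguingAgainst st α (t - 1) →
          GreedyChoice (E.Q α (t - 1)) (E.B (t - 1)) (ev α (E.Q α (t - 1))) e false a b)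

/-- The inner condition of the shallow behaviour for a contribution set `C`. -/
def ShallowInner (Qp : QBAF U) (Bp : BAF U) (σα : U → ℝ) (e : U) (forE : Bool)
    (C : Finset (U × U)) (max : ℕ) : Prop :=
  C.card ≤ max ∧ (∀ p ∈ C, p.2 = e) ∧
    (if forE then
        C ⊆ Qp.Supp \ Bp.Supp ∧
          ∀ p ∈ C, ∀ b : U, (b, e) ∈ Qp.Supp → (b, e) ∉ Bp.Supp ∪ C → σα b ≤ σα p.1
      else
        C ⊆ Qp.Att \ Bp.Att ∧
          ∀ p ∈ C, ∀ b : U, (b, e) ∈ Qp.Att → (b, e) ∉ Bp.Att ∪ C → σα b ≤ σα p.1)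

/-- A contribution set is a correct shallow contribution: it satisfies the inner condition
and is of maximal cardinality doing so. -/
def ShallowOK (Qp : QBAF U) (Bp : BAF U) (σα : U → ℝ) (e : U) (forE : Bool)
    (C : Finset (U × U)) (max : ℕ) : Prop :=
  ShallowInner Qp Bp σα e forE C max ∧
    ∀ C' : Finset (U × U), ShallowInner Qp Bp σα e forE C' max → C'.card ≤ C.card

/-- A private view of the exchange BAF `Bp` by an agent with private QBAF `Qα`. -/
def PrivateView (Bp : BAF U) (Qα : QBAF U) (V : QBAF U) : Prop :=
  Bp.Sub V.toBAF ∧ V.Sub Qα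

/-- `ε` is the perceived effect on `e` of the pair `(a,b)` for an agent with private QBAF
`Qp` given the exchange BAF `Bp` (under the DF-QuAD evaluation). -/
def PerceivedEffect (Qp : QBAF U) (Bp : BAF U) (e a b : U) (ε : ℝ) : Prop :=
  ∃ (V V' : QBAF U) (f f' : U → ℝ),
    PrivateView Bp Qp V ∧
    V'.X = insert a V.X ∧
    V'.Att = (V'.X ×ˢ V'.X) ∩ Qp.Att ∧
    V'.Supp = (V'.X ×ˢ V'.X) ∩ Qp.Supp ∧
    (∀ x ∈ V'.X, V'.bs x = Qp.bs x) ∧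
    IsDFQuADEval V f ∧ IsDFQuADEval V' f' ∧
    ε = f' e - f e

/-- A pair eligible for the counterfactual behaviour. -/
def CFEligible (Qp : QBAF U) (Bp : BAF U) (a b : U) : Prop :=
  (a, b) ∈ Qp.edges ∧ (a, b) ∉ Bp.edges ∧ a ∈ Qp.X ∧ a ∉ Bp.X ∧ b ∈ Bp.X

/-- Agent `α` exhibits counterfactual behaviour throughout the AX `E`,
where `εf α t a b` is the perceived effect of `(a,b)` at timestep `t`. -/
def CFBehaviour [DecidableEq Ag] (E : AX U Ag) (st : Ag → ℕ → ℤ)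
    (εf : Ag → ℕ → U → U → ℝ) (α : Ag) : Prop :=
  ∀ t, 0 < t → t ≤ E.n →
    E.Cset α t = ∅ ∨
      ∃ a b : U, E.Cset α t = {(a, b)} ∧
        CFEligible (E.Q α (t - 1)) (E.B (t - 1)) a b ∧
        (ArguingFor st α (t - 1) →
          0 < εf α t a b ∧
            ∀ a' b' : U, CFEligible (E.Q α (t - 1)) (E.B (t - 1)) a' b' →
              εf α t a' b' ≤ εf α t a b) ∧
        (ArguingAgainst st α (t - 1) →
          εf α t a b < 0 ∧
            ∀ a' b' : U, CFEligible (E.Q α (t - 1)) (E.B (t - 1)) a' b' →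
              εf α t a b ≤ εf α t a' b')

end Behaviours



section Aux
variable {U : Type u} [DecidableEq U]

lemma BAF.IsPath.append {B : BAF U} {x y z : U} {p : List (U × U)}
    (hp : B.IsPath x y p) (h : (y, z) ∈ B.edges) :
    B.IsPath x z (p ++ [(y, z)]) := by
  induction hp with
  | single h1 => exact .cons h1 (.single h)
  | cons h1 hp ih => exact .cons h1 (ih h)

lemma QBAF.mem_attackers {Q : QBAF U} {c b : U} : c ∈ Q.attackers b ↔ (c, b) ∈ Q.Att := by
  simp only [QBAF.attackers, Finset.mem_image, Finset.mem_filter]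
  constructor
  · rintro ⟨⟨x, y⟩, ⟨h, rfl⟩, rfl⟩; exact h
  · intro h; exact ⟨(c, b), ⟨h, rfl⟩, rfl⟩

lemma QBAF.mem_supporters {Q : QBAF U} {c b : U} : c ∈ Q.supporters b ↔ (c, b) ∈ Q.Supp := by
  simp only [QBAF.supporters, Finset.mem_image, Finset.mem_filter]
  constructor
  · rintro ⟨⟨x, y⟩, ⟨h, rfl⟩, rfl⟩; exact h
  · intro h; exact ⟨(c, b), ⟨h, rfl⟩, rfl⟩

lemma dfAgg_eq_prod (l : List ℝ) : dfAgg l = 1 - (l.map (fun v => 1 - v)).prod := by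
  induction l with
  | nil => simp [dfAgg]
  | cons v vs ih => simp only [dfAgg, ih, List.map_cons, List.prod_cons]; ring

lemma dfAgg_finset (s : Finset U) (g : U → ℝ) :
    dfAgg (s.toList.map g) = 1 - ∏ x ∈ s, (1 - g x) := by
  rw [dfAgg_eq_prod, List.map_map]
  rw [show ((fun v => 1 - v) ∘ g) = fun x => 1 - g x from rfl, Finset.prod_map_toList]

end Aux


/-- an added argument with base score 0 and no attackers or supporters has
DF-QuAD evaluation 0 and leaves all other evaluations unchanged. -/
theorem statement12 {U : Type u} [DecidableEq U] (e : U) (Q Q' : QBAF U)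
    (hQ : Q.IsFor e) (hQ' : Q'.IsFor e) (hsub : Q.Sub Q')
    (a : U) (ha : a ∉ Q.X) (hX : Q'.X = insert a Q.X)
    (hbs : Q'.bs a = 0)
    (hnoin : ∀ b : U, (b, a) ∉ Q'.edges)
    (hsrc : ∀ p ∈ Q'.edges, p ∉ Q.edges → p.1 = a)
    (f f' : U → ℝ) (hf : IsDFQuADEval Q f) (hf' : IsDFQuADEval Q' f') :
    f' a = 0 ∧ ∀ b ∈ Q.X, f' b = f b := by
  classical
  have hirr : ∀ x : U, ¬ Relation.TransGen (fun x y => (x, y) ∈ Q'.edges) x x := by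
    have hpath : ∀ {x y : U}, Relation.TransGen (fun x y => (x, y) ∈ Q'.edges) x y →
        ∃ p, Q'.toBAF.IsPath x y p := by
      intro x y h
      induction h with
      | single h => exact ⟨_, .single h⟩
      | tail _ h ih => obtain ⟨p, hp⟩ := ih; exact ⟨_, hp.append h⟩
    intro x hx
    obtain ⟨p, hp⟩ := hpath hx
    exact hQ'.1.acyclic x p hp
  have haX : a ∈ Q'.X := hX ▸ Finset.mem_insert_self a Q.X
  have hAa : Q'.attackers a = ∅ := by
    ext c
    simp only [QBAF.mem_attackers, Finset.notMem_empty, iff_false]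
    intro h; exact hnoin c (Finset.mem_union_left _ h)
  have hSa : Q'.supporters a = ∅ := by
    ext c
    simp only [QBAF.mem_supporters, Finset.notMem_empty, iff_false]
    intro h; exact hnoin c (Finset.mem_union_right _ h)
  have hfa : f' a = 0 := by
    rw [hf' a haX, hAa, hSa, hbs]
    norm_num [dfComb, dfAgg]
  have hsubA : ∀ b c, (c, b) ∈ Q'.Att → c = a ∨ (c, b) ∈ Q.Att := by
    intro b c h
    by_cases hq : (c, b) ∈ Q.edges
    · rcases Finset.mem_union.mp hq with h1 | h1
      · exact Or.inr h1
      · exact absurd ⟨h, hsub.2.2.1 h1⟩ (hQ'.1.disj (c, b))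
    · exact Or.inl (hsrc (c, b) (Finset.mem_union_left _ h) hq)
  have hsubS : ∀ b c, (c, b) ∈ Q'.Supp → c = a ∨ (c, b) ∈ Q.Supp := by
    intro b c h
    by_cases hq : (c, b) ∈ Q.edges
    · rcases Finset.mem_union.mp hq with h1 | h1
      · exact absurd ⟨hsub.2.1 h1, h⟩ (hQ'.1.disj (c, b))
      · exact Or.inr h1
    · exact Or.inl (hsrc (c, b) (Finset.mem_union_right _ h) hq)
  set anc : U → Finset U :=
    fun b => Q'.X.filter (fun x => Relation.TransGen (fun x y => (x, y) ∈ Q'.edges) x b)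
    with hanc
  have mem_anc : ∀ {x b : U}, x ∈ anc b ↔
      x ∈ Q'.X ∧ Relation.TransGen (fun x y => (x, y) ∈ Q'.edges) x b := by
    intro x b; rw [hanc]; exact Finset.mem_filter
  have hdec : ∀ b c : U, c ∈ Q'.X → (c, b) ∈ Q'.edges → (anc c).card < (anc b).card := by
    intro b c hcX hcb
    have hss : anc c ⊆ anc b := by
      intro x hx
      obtain ⟨h1, h2⟩ := mem_anc.mp hx
      exact mem_anc.mpr ⟨h1, h2.tail hcb⟩
    refine Finset.card_lt_card ((Finset.ssubset_iff_of_subset hss).mpr ⟨c, ?_, ?_⟩)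
    · exact mem_anc.mpr ⟨hcX, .single hcb⟩
    · intro hc; exact hirr c (mem_anc.mp hc).2
  have main : ∀ n : ℕ, ∀ b ∈ Q.X, (anc b).card ≤ n → f' b = f b := by
    intro n
    induction n with
    | zero =>
      intro b hb hcard
      have hA' : Q'.attackers b = ∅ := by
        ext c
        simp only [QBAF.mem_attackers, Finset.notMem_empty, iff_false]
        intro h
        have hcX : c ∈ Q'.X := (hQ'.1.att_mem (c, b) h).1
        have hm : c ∈ anc b := mem_anc.mpr ⟨hcX, .single (Finset.mem_union_left _ h)⟩
        have := Finset.card_pos.mpr ⟨c, hm⟩; omega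
      have hS' : Q'.supporters b = ∅ := by
        ext c
        simp only [QBAF.mem_supporters, Finset.notMem_empty, iff_false]
        intro h
        have hcX : c ∈ Q'.X := (hQ'.1.supp_mem (c, b) h).1
        have hm : c ∈ anc b := mem_anc.mpr ⟨hcX, .single (Finset.mem_union_right _ h)⟩
        have := Finset.card_pos.mpr ⟨c, hm⟩; omega
      have hA : Q.attackers b = ∅ := by
        ext c
        simp only [QBAF.mem_attackers, Finset.notMem_empty, iff_false]
        intro h
        have : c ∈ Q'.attackers b := QBAF.mem_attackers.mpr (hsub.2.1 h)
        rw [hA'] at this; exact absurd this (Finset.notMem_empty c)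
      have hS : Q.supporters b = ∅ := by
        ext c
        simp only [QBAF.mem_supporters, Finset.notMem_empty, iff_false]
        intro h
        have : c ∈ Q'.supporters b := QBAF.mem_supporters.mpr (hsub.2.2.1 h)
        rw [hS'] at this; exact absurd this (Finset.notMem_empty c)
      rw [hf' b (hsub.1 hb), hf b hb, hA', hS', hA, hS, hsub.2.2.2 b hb]
      simp
    | succ n ih =>
      intro b hb hcard
      have key : ∀ c ∈ Q.X, (c, b) ∈ Q'.edges → f' c = f c := by
        intro c hc hrc
        have := hdec b c (hsub.1 hc) hrc
        exact ih c hc (by omega)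
      have hanotinA : a ∉ Q.attackers b := fun h =>
        ha (hQ.1.att_mem (a, b) (QBAF.mem_attackers.mp h)).1
      have hanotinS : a ∉ Q.supporters b := fun h =>
        ha (hQ.1.supp_mem (a, b) (QBAF.mem_supporters.mp h)).1
      have prodcongrA : ∏ x ∈ Q.attackers b, (1 - f' x) = ∏ x ∈ Q.attackers b, (1 - f x) := by
        refine Finset.prod_congr rfl fun c hc => ?_
        have hcAtt := QBAF.mem_attackers.mp hc
        rw [key c (hQ.1.att_mem (c, b) hcAtt).1 (Finset.mem_union_left _ (hsub.2.1 hcAtt))]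
      have prodcongrS : ∏ x ∈ Q.supporters b, (1 - f' x) = ∏ x ∈ Q.supporters b, (1 - f x) := by
        refine Finset.prod_congr rfl fun c hc => ?_
        have hcSupp := QBAF.mem_supporters.mp hc
        rw [key c (hQ.1.supp_mem (c, b) hcSupp).1 (Finset.mem_union_right _ (hsub.2.2.1 hcSupp))]
      have prodA : ∏ x ∈ Q'.attackers b, (1 - f' x) = ∏ x ∈ Q.attackers b, (1 - f x) := by
        by_cases hmem : (a, b) ∈ Q'.Att
        · have h : Q'.attackers b = insert a (Q.attackers b) := by
            ext c
            simp only [Finset.mem_insert, QBAF.mem_attackers]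
            constructor
            · intro h; exact hsubA b c h
            · rintro (rfl | h); exacts [hmem, hsub.2.1 h]
          rw [h, Finset.prod_insert hanotinA, hfa, sub_zero, one_mul]
          exact prodcongrA
        · have h : Q'.attackers b = Q.attackers b := by
            ext c
            simp only [QBAF.mem_attackers]
            constructor
            · intro h
              rcases hsubA b c h with rfl | h1
              · exact absurd h hmem
              · exact h1
            · intro h; exact hsub.2.1 h
          rw [h]; exact prodcongrA
      have prodS : ∏ x ∈ Q'.supporters b, (1 - f' x) = ∏ x ∈ Q.supporters b, (1 - f x) := by
        by_cases hmem : (a, b) ∈ Q'.Supp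
        · have h : Q'.supporters b = insert a (Q.supporters b) := by
            ext c
            simp only [Finset.mem_insert, QBAF.mem_supporters]
            constructor
            · intro h; exact hsubS b c h
            · rintro (rfl | h); exacts [hmem, hsub.2.2.1 h]
          rw [h, Finset.prod_insert hanotinS, hfa, sub_zero, one_mul]
          exact prodcongrS
        · have h : Q'.supporters b = Q.supporters b := by
            ext c
            simp only [QBAF.mem_supporters]
            constructor
            · intro h
              rcases hsubS b c h with rfl | h1
              · exact absurd h hmem
              · exact h1
            · intro h; exact hsub.2.2.1 h
          rw [h]; exact prodcongrS
      rw [hf' b (hsub.1 hb), hf b hb, dfAgg_finset, dfAgg_finset, dfAgg_finset, dfAgg_finset,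
        prodA, prodS, hsub.2.2.2 b hb]
  exact ⟨hfa, fun b hb => main (anc b).card b hb le_rfl⟩
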